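/- Let (a,b) be a perplex parameter and let f, g : ℝ² → ℝ² be ℙ_{a,b}-differentiable at x ∈ ℝ² with derivatives f'(x) and g'(x). Then the product f * g (defined pointwise by (f*g)(y) := f(y) * g(y)) is ℙ_{a,b}-differentiable at x with derivative (f*g)'(x) = (f'(x) * g(x)) + (f(x) * g'(x)); moreover f + g is ℙ_{a,b}-differentiable at x with derivative f'(x) + g'(x). -/

import Mathlib

open Filter Topology

noncomputable section

/-- The perplex product on `ℝ²` determined by the parameters `a = (a₁,a₂,a₃)`,
`b = (b₁,b₂,b₃)`. -/
def pmul (a₁ a₂ a₃ b₁ b₂ b₃ : ℝ) (x y : ℝ × ℝ) : ℝ × ℝ :=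
  (a₁ * x.1 * y.1 + a₂ * (x.1 * y.2 + x.2 * y.1) + a₃ * x.2 * y.2,
   b₁ * x.1 * y.1 + b₂ * (x.1 * y.2 + x.2 * y.1) + b₃ * x.2 * y.2)

/-- `(a,b)` is a perplex parameter: conditions (i)-(iv). -/
def IsPerplexParam (a₁ a₂ a₃ b₁ b₂ b₃ : ℝ) : Prop :=
  a₁ * a₃ - a₂ ^ 2 ≠ 0 ∧ a₁ * b₂ - a₂ * b₁ ≠ 0 ∧
    a₂ * b₂ - a₃ * b₁ = 0 ∧ a₁ * a₃ - a₂ ^ 2 + a₂ * b₃ - a₃ * b₂ = 0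

/-- The multiplicative identity `𝟙` of the perplex algebra. -/
def pone (a₁ a₂ b₁ b₂ : ℝ) : ℝ × ℝ :=
  (1 / (a₁ * b₂ - a₂ * b₁)) • ((b₂, -b₁) : ℝ × ℝ)

/-- The perplex norm `N`. -/
def pN (a₁ a₂ a₃ b₁ b₂ b₃ : ℝ) (x : ℝ × ℝ) : ℝ :=
  (a₁ * b₂ - a₂ * b₁) * x.1 ^ 2 + (a₁ * b₃ - a₃ * b₁) * x.1 * x.2 -
    (a₁ * a₃ - a₂ ^ 2) * x.2 ^ 2

/-- The Euclidean norm on `ℝ²`. -/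
noncomputable def enorm2 (x : ℝ × ℝ) : ℝ := Real.sqrt (x.1 ^ 2 + x.2 ^ 2)

open Classical in
/-- The `*`-inverse of `x` (junk value `0` if `x` is not invertible). -/
noncomputable def pinv (a₁ a₂ a₃ b₁ b₂ b₃ : ℝ) (x : ℝ × ℝ) : ℝ × ℝ :=
  if h : ∃ y, pmul a₁ a₂ a₃ b₁ b₂ b₃ x y = pone a₁ a₂ b₁ b₂ then h.choose else 0

/-- A sequence of invertible elements converging to `0` that is positively
separated from the zero-divisor directions. -/
def PosSep (a₁ a₂ a₃ b₁ b₂ b₃ : ℝ) (h : ℕ → ℝ × ℝ) : Prop :=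
  (∀ n, ∃ y, pmul a₁ a₂ a₃ b₁ b₂ b₃ (h n) y = pone a₁ a₂ b₁ b₂) ∧
    Tendsto h atTop (nhds 0) ∧
      ∃ c > 0, ∀ n, c ≤ |pN a₁ a₂ a₃ b₁ b₂ b₃ ((enorm2 (h n))⁻¹ • h n)|

/-- `f` is `ℙ_{a,b}`-differentiable at `x` with derivative `L`: the difference
quotients along every positively separated sequence converge, on a whole
neighborhood of `x`, to a value depending continuously on the base point, with
value `L` at `x`. -/
def PDiffAt (a₁ a₂ a₃ b₁ b₂ b₃ : ℝ) (f : ℝ × ℝ → ℝ × ℝ) (L : ℝ × ℝ)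
    (x : ℝ × ℝ) : Prop :=
  ∃ U ∈ nhds x, ∃ d : ℝ × ℝ → ℝ × ℝ, d x = L ∧ ContinuousOn d U ∧
    ∀ y ∈ U, ∀ h : ℕ → ℝ × ℝ, PosSep a₁ a₂ a₃ b₁ b₂ b₃ h →
      Tendsto
        (fun n => pmul a₁ a₂ a₃ b₁ b₂ b₃ (f (y + h n) - f y)
          (pinv a₁ a₂ a₃ b₁ b₂ b₃ (h n)))
        atTop (nhds (d y))

section Alg
variable {a₁ a₂ a₃ b₁ b₂ b₃ : ℝ}

lemma perplex_R0 (hp : IsPerplexParam a₁ a₂ a₃ b₁ b₂ b₃) :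
    b₂ ^ 2 - b₁ * b₃ + a₂ * b₁ - a₁ * b₂ = 0 := by
  obtain ⟨h1, h2, h3, h4⟩ := hp
  rcases eq_or_ne a₂ 0 with h | h
  · subst h
    have ha3 : a₃ ≠ 0 := fun h' => h1 (by rw [h']; ring)
    have hb1 : b₁ = 0 := by
      have : a₃ * b₁ = 0 := by linarith
      exact (mul_eq_zero.mp this).resolve_left ha3
    have hb2 : b₂ = a₁ := by
      have : a₃ * (a₁ - b₂) = 0 := by nlinarith
      have := (mul_eq_zero.mp this).resolve_left ha3
      linarith
    subst hb1; rw [hb2]; ring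
  · apply mul_left_cancel₀ h
    linear_combination (b₂ - a₁) * h3 - b₁ * h4

lemma pmul_comm (x y : ℝ × ℝ) :
    pmul a₁ a₂ a₃ b₁ b₂ b₃ x y = pmul a₁ a₂ a₃ b₁ b₂ b₃ y x := by
  refine Prod.ext ?_ ?_ <;> simp only [pmul] <;> ring

lemma pmul_assoc (hp : IsPerplexParam a₁ a₂ a₃ b₁ b₂ b₃) (x y z : ℝ × ℝ) :
    pmul a₁ a₂ a₃ b₁ b₂ b₃ (pmul a₁ a₂ a₃ b₁ b₂ b₃ x y) z
      = pmul a₁ a₂ a₃ b₁ b₂ b₃ x (pmul a₁ a₂ a₃ b₁ b₂ b₃ y z) := by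
  have hR := perplex_R0 hp
  obtain ⟨h1, h2, h3, h4⟩ := hp
  refine Prod.ext ?_ ?_ <;> simp only [pmul]
  · linear_combination (x.2*y.1*z.1 - x.1*y.1*z.2) * h3 + (x.2*y.2*z.1 - x.1*y.2*z.2) * h4
  · linear_combination (-(x.2*y.2*z.1) + x.1*y.2*z.2) * h3 + (x.2*y.1*z.1 - x.1*y.1*z.2) * hR

lemma pmul_add_left (u v w : ℝ × ℝ) :
    pmul a₁ a₂ a₃ b₁ b₂ b₃ (u + v) w
      = pmul a₁ a₂ a₃ b₁ b₂ b₃ u w + pmul a₁ a₂ a₃ b₁ b₂ b₃ v w := by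
  refine Prod.ext ?_ ?_ <;>
    simp only [pmul, Prod.fst_add, Prod.snd_add] <;> ring

lemma pmul_smul_left (t : ℝ) (u w : ℝ × ℝ) :
    pmul a₁ a₂ a₃ b₁ b₂ b₃ (t • u) w = t • pmul a₁ a₂ a₃ b₁ b₂ b₃ u w := by
  refine Prod.ext ?_ ?_ <;>
    simp only [pmul, Prod.smul_fst, Prod.smul_snd, smul_eq_mul] <;> ring

lemma pmul_smul_right (t : ℝ) (u w : ℝ × ℝ) :
    pmul a₁ a₂ a₃ b₁ b₂ b₃ u (t • w) = t • pmul a₁ a₂ a₃ b₁ b₂ b₃ u w := by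
  rw [pmul_comm, pmul_smul_left, pmul_comm]

lemma pmul_neg_right (u w : ℝ × ℝ) :
    pmul a₁ a₂ a₃ b₁ b₂ b₃ u (-w) = -pmul a₁ a₂ a₃ b₁ b₂ b₃ u w := by
  refine Prod.ext ?_ ?_ <;>
    simp only [pmul, Prod.fst_neg, Prod.snd_neg] <;> ring

lemma pmul_one (hp : IsPerplexParam a₁ a₂ a₃ b₁ b₂ b₃) (x : ℝ × ℝ) :
    pmul a₁ a₂ a₃ b₁ b₂ b₃ x (pone a₁ a₂ b₁ b₂) = x := by
  have hR := perplex_R0 hp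
  have hA : a₁ * b₂ - a₂ * b₁ ≠ 0 := hp.2.1
  obtain ⟨h1, h2, h3, h4⟩ := hp
  have hu : 1 / (a₁ * b₂ - a₂ * b₁) * (a₁ * b₂ - a₂ * b₁) = 1 := one_div_mul_cancel hA
  refine Prod.ext ?_ ?_ <;>
    simp only [pmul, pone, Prod.smul_mk, smul_eq_mul]
  · linear_combination (1 / (a₁ * b₂ - a₂ * b₁)) * x.2 * h3 + x.1 * hu
  · linear_combination (1 / (a₁ * b₂ - a₂ * b₁)) * x.2 * hR + x.2 * hu

lemma one_pmul (hp : IsPerplexParam a₁ a₂ a₃ b₁ b₂ b₃) (x : ℝ × ℝ) :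
    pmul a₁ a₂ a₃ b₁ b₂ b₃ (pone a₁ a₂ b₁ b₂) x = x := by
  rw [pmul_comm]; exact pmul_one hp x

lemma exists_pinv (hp : IsPerplexParam a₁ a₂ a₃ b₁ b₂ b₃) {x : ℝ × ℝ}
    (hN : pN a₁ a₂ a₃ b₁ b₂ b₃ x ≠ 0) :
    ∃ y, pmul a₁ a₂ a₃ b₁ b₂ b₃ x y = pone a₁ a₂ b₁ b₂ := by
  have hR := perplex_R0 hp
  have hA : a₁ * b₂ - a₂ * b₁ ≠ 0 := hp.2.1
  obtain ⟨h1, h2, h3, h4⟩ := hp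
  refine ⟨((a₁ * b₂ - a₂ * b₁) * pN a₁ a₂ a₃ b₁ b₂ b₃ x)⁻¹ •
      (b₂ * (b₂ * x.1 + b₃ * x.2) + b₁ * (a₂ * x.1 + a₃ * x.2),
       -(b₂ * (b₁ * x.1 + b₂ * x.2) + b₁ * (a₁ * x.1 + a₂ * x.2))), ?_⟩
  have hAN : (a₁ * b₂ - a₂ * b₁) * pN a₁ a₂ a₃ b₁ b₂ b₃ x ≠ 0 := mul_ne_zero hA hN
  have hu : 1 / (a₁ * b₂ - a₂ * b₁) * (a₁ * b₂ - a₂ * b₁) = 1 := one_div_mul_cancel hA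
  have hc := inv_mul_cancel₀ hAN
  rw [pmul_smul_right]
  simp only [pN] at hc ⊢
  refine Prod.ext ?_ ?_ <;>
    simp only [pmul, pone, Prod.smul_mk, Prod.smul_fst, Prod.smul_snd, smul_eq_mul]
  · linear_combination
      (((a₁*b₂-a₂*b₁) * ((a₁*b₂-a₂*b₁)*x.1^2 + (a₁*b₃-a₃*b₁)*x.1*x.2 - (a₁*a₃-a₂^2)*x.2^2))⁻¹ *
        ((b₃ - a₂) * x.2^2)) * h3 -
      (((a₁*b₂-a₂*b₁) * ((a₁*b₂-a₂*b₁)*x.1^2 + (a₁*b₃-a₃*b₁)*x.1*x.2 - (a₁*a₃-a₂^2)*x.2^2))⁻¹ *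
        (a₃ * x.2^2)) * hR -
      (((a₁*b₂-a₂*b₁) * ((a₁*b₂-a₂*b₁)*x.1^2 + (a₁*b₃-a₃*b₁)*x.1*x.2 - (a₁*a₃-a₂^2)*x.2^2))⁻¹ *
        ((a₁*b₂-a₂*b₁)*x.1^2 + (a₁*b₃-a₃*b₁)*x.1*x.2 - (a₁*a₃-a₂^2)*x.2^2) * b₂) * hu +
      ((1 / (a₁*b₂-a₂*b₁)) * b₂) * hc
  · linear_combination
      (-(((a₁*b₂-a₂*b₁) * ((a₁*b₂-a₂*b₁)*x.1^2 + (a₁*b₃-a₃*b₁)*x.1*x.2 - (a₁*a₃-a₂^2)*x.2^2))⁻¹ *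
        (b₁ * x.2^2))) * h4 +
      (((a₁*b₂-a₂*b₁) * ((a₁*b₂-a₂*b₁)*x.1^2 + (a₁*b₃-a₃*b₁)*x.1*x.2 - (a₁*a₃-a₂^2)*x.2^2))⁻¹ *
        ((a₁*b₂-a₂*b₁)*x.1^2 + (a₁*b₃-a₃*b₁)*x.1*x.2 - (a₁*a₃-a₂^2)*x.2^2) * b₁) * hu -
      ((1 / (a₁*b₂-a₂*b₁)) * b₁) * hc

end Alg
section Inv
variable {a₁ a₂ a₃ b₁ b₂ b₃ : ℝ}

lemma pinv_spec {x : ℝ × ℝ}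
    (h : ∃ y, pmul a₁ a₂ a₃ b₁ b₂ b₃ x y = pone a₁ a₂ b₁ b₂) :
    pmul a₁ a₂ a₃ b₁ b₂ b₃ x (pinv a₁ a₂ a₃ b₁ b₂ b₃ x) = pone a₁ a₂ b₁ b₂ := by
  rw [pinv, dif_pos h]
  exact h.choose_spec

lemma pinv_unique (hp : IsPerplexParam a₁ a₂ a₃ b₁ b₂ b₃) {x y z : ℝ × ℝ}
    (hy : pmul a₁ a₂ a₃ b₁ b₂ b₃ x y = pone a₁ a₂ b₁ b₂)
    (hz : pmul a₁ a₂ a₃ b₁ b₂ b₃ x z = pone a₁ a₂ b₁ b₂) : y = z := by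
  calc y = pmul a₁ a₂ a₃ b₁ b₂ b₃ y (pmul a₁ a₂ a₃ b₁ b₂ b₃ x z) := by
            rw [hz, pmul_one hp]
    _ = pmul a₁ a₂ a₃ b₁ b₂ b₃ (pmul a₁ a₂ a₃ b₁ b₂ b₃ x y) z := by
            rw [← pmul_assoc hp, pmul_comm y x]
    _ = z := by rw [hy, one_pmul hp]

lemma pinv_smul (hp : IsPerplexParam a₁ a₂ a₃ b₁ b₂ b₃) {t : ℝ} (ht : t ≠ 0)
    {x : ℝ × ℝ} (hx : ∃ y, pmul a₁ a₂ a₃ b₁ b₂ b₃ x y = pone a₁ a₂ b₁ b₂) :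
    pinv a₁ a₂ a₃ b₁ b₂ b₃ (t • x) = t⁻¹ • pinv a₁ a₂ a₃ b₁ b₂ b₃ x := by
  have h1 : pmul a₁ a₂ a₃ b₁ b₂ b₃ (t • x) (t⁻¹ • pinv a₁ a₂ a₃ b₁ b₂ b₃ x)
      = pone a₁ a₂ b₁ b₂ := by
    rw [pmul_smul_left, pmul_smul_right, smul_smul, mul_inv_cancel₀ ht, one_smul,
      pinv_spec hx]
  exact pinv_unique hp (pinv_spec ⟨_, h1⟩) h1

lemma pN_smul (t : ℝ) (x : ℝ × ℝ) :
    pN a₁ a₂ a₃ b₁ b₂ b₃ (t • x) = t ^ 2 * pN a₁ a₂ a₃ b₁ b₂ b₃ x := by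
  simp only [pN, Prod.smul_fst, Prod.smul_snd, smul_eq_mul]; ring

lemma pN_neg (x : ℝ × ℝ) :
    pN a₁ a₂ a₃ b₁ b₂ b₃ (-x) = pN a₁ a₂ a₃ b₁ b₂ b₃ x := by
  simp only [pN, Prod.fst_neg, Prod.snd_neg]; ring

lemma enorm2_pos {x : ℝ × ℝ} (hx : x ≠ 0) : 0 < enorm2 x := by
  rw [enorm2, Real.sqrt_pos]
  rcases eq_or_ne x.1 0 with h1 | h1
  · have h2 : x.2 ≠ 0 := by
      intro h2; exact hx (Prod.ext h1 h2)
    nlinarith [sq_nonneg x.1, pow_pos (abs_pos.mpr h2) 2, sq_abs x.2]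
  · nlinarith [sq_nonneg x.2, pow_pos (abs_pos.mpr h1) 2, sq_abs x.1]

lemma enorm2_smul (t : ℝ) (x : ℝ × ℝ) : enorm2 (t • x) = |t| * enorm2 x := by
  rw [enorm2, enorm2, show (t • x).1 ^ 2 + (t • x).2 ^ 2 = t ^ 2 * (x.1 ^ 2 + x.2 ^ 2) by
    simp only [Prod.smul_fst, Prod.smul_snd, smul_eq_mul]; ring,
    Real.sqrt_mul (sq_nonneg t), Real.sqrt_sq_eq_abs]

lemma pN_ne_zero_ne_zero {x : ℝ × ℝ} (h : pN a₁ a₂ a₃ b₁ b₂ b₃ x ≠ 0) : x ≠ 0 := by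
  intro h0; apply h; rw [h0]; simp [pN]

lemma posSep_smul (hp : IsPerplexParam a₁ a₂ a₃ b₁ b₂ b₃) {e : ℝ × ℝ}
    (hN : pN a₁ a₂ a₃ b₁ b₂ b₃ e ≠ 0) {v : ℕ → ℝ} (hv0 : ∀ n, v n ≠ 0)
    (hvlim : Tendsto v atTop (nhds 0)) :
    PosSep a₁ a₂ a₃ b₁ b₂ b₃ (fun n => v n • e) := by
  obtain ⟨w, hw⟩ := exists_pinv hp hN
  have hE : 0 < enorm2 e := enorm2_pos (pN_ne_zero_ne_zero hN)
  refine ⟨fun n => ⟨(v n)⁻¹ • w, ?_⟩, ?_, ?_⟩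
  · rw [pmul_smul_left, pmul_smul_right, smul_smul, mul_inv_cancel₀ (hv0 n), one_smul, hw]
  · have := hvlim.smul_const e
    rwa [zero_smul] at this
  · refine ⟨|pN a₁ a₂ a₃ b₁ b₂ b₃ e| / (enorm2 e) ^ 2, by positivity, fun n => ?_⟩
    have hvn := hv0 n
    have h1 : (enorm2 (v n • e))⁻¹ • v n • e = ((|v n| * enorm2 e)⁻¹ * v n) • e := by
      rw [enorm2_smul, smul_smul]
    have h2 : ((|v n| * enorm2 e)⁻¹ * v n) ^ 2 = ((enorm2 e) ^ 2)⁻¹ := by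
      rw [mul_inv, mul_pow, mul_pow, inv_pow, inv_pow, sq_abs]
      have h3 : (v n ^ 2)⁻¹ * ((enorm2 e) ^ 2)⁻¹ * v n ^ 2
          = ((enorm2 e) ^ 2)⁻¹ * ((v n ^ 2)⁻¹ * v n ^ 2) := by ring
      rw [h3, inv_mul_cancel₀ (pow_ne_zero 2 hvn), mul_one]
    have h2' : |((|v n| * enorm2 e)⁻¹ * v n) ^ 2| = ((enorm2 e) ^ 2)⁻¹ := by
      rw [abs_of_nonneg (sq_nonneg ((|v n| * enorm2 e)⁻¹ * v n)), h2]
    rw [h1, pN_smul, abs_mul, h2']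
    exact le_of_eq (by rw [div_eq_mul_inv, mul_comm])
end Inv
section Ana
variable {a₁ a₂ a₃ b₁ b₂ b₃ : ℝ}

lemma continuous_pmul2 :
    Continuous (fun p : (ℝ × ℝ) × (ℝ × ℝ) => pmul a₁ a₂ a₃ b₁ b₂ b₃ p.1 p.2) := by
  unfold pmul; fun_prop

lemma tendsto_pmul {α : Type*} {l : Filter α} {u v : α → ℝ × ℝ} {U V : ℝ × ℝ}
    (hu : Tendsto u l (nhds U)) (hv : Tendsto v l (nhds V)) :
    Tendsto (fun n => pmul a₁ a₂ a₃ b₁ b₂ b₃ (u n) (v n)) l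
      (nhds (pmul a₁ a₂ a₃ b₁ b₂ b₃ U V)) :=
  (continuous_pmul2.tendsto (U, V)).comp (hu.prodMk_nhds hv)

lemma continuousOn_pmul2 {s : Set (ℝ × ℝ)} {u v : ℝ × ℝ → ℝ × ℝ}
    (hu : ContinuousOn u s) (hv : ContinuousOn v s) :
    ContinuousOn (fun y => pmul a₁ a₂ a₃ b₁ b₂ b₃ (u y) (v y)) s :=
  continuous_pmul2.comp_continuousOn (hu.prodMk hv)

lemma prod_quot_id (hp : IsPerplexParam a₁ a₂ a₃ b₁ b₂ b₃) (u u' v v' w : ℝ × ℝ) :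
    pmul a₁ a₂ a₃ b₁ b₂ b₃ (pmul a₁ a₂ a₃ b₁ b₂ b₃ u v - pmul a₁ a₂ a₃ b₁ b₂ b₃ u' v') w
      = pmul a₁ a₂ a₃ b₁ b₂ b₃ (pmul a₁ a₂ a₃ b₁ b₂ b₃ (u - u') w) v
        + pmul a₁ a₂ a₃ b₁ b₂ b₃ u' (pmul a₁ a₂ a₃ b₁ b₂ b₃ (v - v') w) := by
  have h1 : pmul a₁ a₂ a₃ b₁ b₂ b₃ u v - pmul a₁ a₂ a₃ b₁ b₂ b₃ u' v'
      = pmul a₁ a₂ a₃ b₁ b₂ b₃ (u - u') v + pmul a₁ a₂ a₃ b₁ b₂ b₃ u' (v - v') := by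
    refine Prod.ext ?_ ?_ <;>
      simp only [pmul, Prod.fst_sub, Prod.snd_sub, Prod.fst_add, Prod.snd_add] <;> ring
  rw [h1, pmul_add_left, pmul_assoc hp u' (v - v') w, pmul_assoc hp (u - u') v w,
    pmul_comm v w, ← pmul_assoc hp]

lemma key_deriv (hp : IsPerplexParam a₁ a₂ a₃ b₁ b₂ b₃) {f : ℝ × ℝ → ℝ × ℝ}
    {D y e : ℝ × ℝ} (hN : pN a₁ a₂ a₃ b₁ b₂ b₃ e ≠ 0)
    (H : ∀ h : ℕ → ℝ × ℝ, PosSep a₁ a₂ a₃ b₁ b₂ b₃ h →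
      Tendsto (fun n => pmul a₁ a₂ a₃ b₁ b₂ b₃ (f (y + h n) - f y)
        (pinv a₁ a₂ a₃ b₁ b₂ b₃ (h n))) atTop (nhds D)) :
    HasDerivAt (fun t : ℝ => f (y + t • e)) (pmul a₁ a₂ a₃ b₁ b₂ b₃ D e) 0 := by
  have hex : ∃ w, pmul a₁ a₂ a₃ b₁ b₂ b₃ e w = pone a₁ a₂ b₁ b₂ := exists_pinv hp hN
  rw [hasDerivAt_iff_tendsto_slope_zero, tendsto_iff_seq_tendsto]
  intro u hu
  have hu0 : ∀ᶠ n in atTop, u n ≠ 0 := hu self_mem_nhdsWithin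
  have hulim : Tendsto u atTop (nhds 0) := hu.mono_right nhdsWithin_le_nhds
  classical
  set v : ℕ → ℝ := fun n => if u n = 0 then 1 else u n with hv
  have hv0 : ∀ n, v n ≠ 0 := by
    intro n; by_cases h : u n = 0 <;> simp [hv, h]
  have hveq : u =ᶠ[atTop] v := hu0.mono fun n hn => by simp [hv, hn]
  have hvlim : Tendsto v atTop (nhds 0) := hulim.congr' hveq
  have hps := posSep_smul hp hN hv0 hvlim
  have hQ := H _ hps
  have h1 : ∀ n, pmul a₁ a₂ a₃ b₁ b₂ b₃
      (pmul a₁ a₂ a₃ b₁ b₂ b₃ (f (y + v n • e) - f y)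
        (pinv a₁ a₂ a₃ b₁ b₂ b₃ (v n • e))) e
      = (v n)⁻¹ • (f (y + v n • e) - f y) := by
    intro n
    rw [pmul_assoc hp, pinv_smul hp (hv0 n) hex, pmul_smul_left, pmul_smul_right,
      pmul_comm (pinv a₁ a₂ a₃ b₁ b₂ b₃ e) e, pinv_spec hex, pmul_one hp]
  have h2 : Tendsto (fun n => (v n)⁻¹ • (f (y + v n • e) - f y)) atTop
      (nhds (pmul a₁ a₂ a₃ b₁ b₂ b₃ D e)) := by
    have ht := tendsto_pmul (a₁ := a₁) (a₂ := a₂) (a₃ := a₃) (b₁ := b₁) (b₂ := b₂)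
      (b₃ := b₃) hQ (tendsto_const_nhds (x := e))
    exact Tendsto.congr h1 ht
  have h3 : (fun n => (u n)⁻¹ • (f (y + u n • e) - f y)) =ᶠ[atTop]
      (fun n => (v n)⁻¹ • (f (y + v n • e) - f y)) := hveq.mono fun n hn => by simp only [hn]
  have h4 := h2.congr' h3.symm
  simp only [Function.comp_def, zero_add]
  convert h4 using 2 with n
  simp [zero_smul]

lemma seg_est (hp : IsPerplexParam a₁ a₂ a₃ b₁ b₂ b₃) {f d : ℝ × ℝ → ℝ × ℝ}
    {U : Set (ℝ × ℝ)}
    (H : ∀ y ∈ U, ∀ h : ℕ → ℝ × ℝ, PosSep a₁ a₂ a₃ b₁ b₂ b₃ h →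
      Tendsto (fun n => pmul a₁ a₂ a₃ b₁ b₂ b₃ (f (y + h n) - f y)
        (pinv a₁ a₂ a₃ b₁ b₂ b₃ (h n))) atTop (nhds (d y)))
    {e : ℝ × ℝ} (hN : pN a₁ a₂ a₃ b₁ b₂ b₃ e ≠ 0) {p : ℝ × ℝ} {s M : ℝ} (hs : 0 ≤ s)
    (hseg : ∀ t ∈ Set.Icc 0 s, p + t • e ∈ U)
    (hM : ∀ t ∈ Set.Icc 0 s, ‖pmul a₁ a₂ a₃ b₁ b₂ b₃ (d (p + t • e)) e‖ ≤ M) :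
    ‖f (p + s • e) - f p‖ ≤ M * s := by
  have key : ∀ t ∈ Set.Icc 0 s, HasDerivAt (fun τ : ℝ => f (p + τ • e))
      (pmul a₁ a₂ a₃ b₁ b₂ b₃ (d (p + t • e)) e) t := by
    intro t ht
    have h0 : HasDerivAt (fun τ : ℝ => f ((p + t • e) + τ • e))
        (pmul a₁ a₂ a₃ b₁ b₂ b₃ (d (p + t • e)) e) 0 :=
      key_deriv hp hN (H _ (hseg t ht))
    have h1 : HasDerivAt (fun τ : ℝ => τ - t) 1 t := by
      simpa using (hasDerivAt_id t).sub_const t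
    have h2 := HasDerivAt.scomp_of_eq t h0 h1 (sub_self t).symm
    rw [one_smul] at h2
    have hfun : ((fun τ : ℝ => f ((p + t • e) + τ • e)) ∘ fun τ : ℝ => τ - t)
        = fun τ : ℝ => f (p + τ • e) := by
      funext τ
      simp only [Function.comp_apply]
      congr 1
      rw [sub_smul]
      abel
    rwa [hfun] at h2
  have hb := norm_image_sub_le_of_norm_deriv_le_segment'
    (f := fun τ : ℝ => f (p + τ • e))
    (f' := fun τ : ℝ => pmul a₁ a₂ a₃ b₁ b₂ b₃ (d (p + τ • e)) e) (a := 0) (b := s)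
    (fun t ht => (key t ht).hasDerivWithinAt)
    (fun t ht => hM t (Set.Ico_subset_Icc_self ht)) s (Set.right_mem_Icc.mpr hs)
  simpa using hb

lemma seg_est_signed (hp : IsPerplexParam a₁ a₂ a₃ b₁ b₂ b₃) {f d : ℝ × ℝ → ℝ × ℝ}
    {U : Set (ℝ × ℝ)}
    (H : ∀ y ∈ U, ∀ h : ℕ → ℝ × ℝ, PosSep a₁ a₂ a₃ b₁ b₂ b₃ h →
      Tendsto (fun n => pmul a₁ a₂ a₃ b₁ b₂ b₃ (f (y + h n) - f y)
        (pinv a₁ a₂ a₃ b₁ b₂ b₃ (h n))) atTop (nhds (d y)))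
    {e : ℝ × ℝ} (hN : pN a₁ a₂ a₃ b₁ b₂ b₃ e ≠ 0) {p : ℝ × ℝ} {s M : ℝ}
    (hseg : ∀ t : ℝ, |t| ≤ |s| → p + t • e ∈ U)
    (hM : ∀ t : ℝ, |t| ≤ |s| → ‖pmul a₁ a₂ a₃ b₁ b₂ b₃ (d (p + t • e)) e‖ ≤ M) :
    ‖f (p + s • e) - f p‖ ≤ M * |s| := by
  rcases le_or_gt 0 s with h | h
  · rw [abs_of_nonneg h]
    refine seg_est hp H hN h (fun t ht => hseg t ?_) (fun t ht => hM t ?_) <;>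
      · rw [abs_of_nonneg ht.1, abs_of_nonneg h]; exact ht.2
  · have hs' : 0 ≤ -s := by linarith
    have hNe : pN a₁ a₂ a₃ b₁ b₂ b₃ (-e) ≠ 0 := by rwa [pN_neg]
    have habs : ∀ t : ℝ, t ∈ Set.Icc 0 (-s) → |(-t)| ≤ |s| := by
      intro t ht
      rw [abs_neg, abs_of_nonneg ht.1, abs_of_neg h]
      exact ht.2
    have hseg' : ∀ t ∈ Set.Icc 0 (-s), p + t • (-e) ∈ U := by
      intro t ht
      have := hseg (-t) (habs t ht)
      rwa [neg_smul, ← smul_neg] at this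
    have hM' : ∀ t ∈ Set.Icc 0 (-s),
        ‖pmul a₁ a₂ a₃ b₁ b₂ b₃ (d (p + t • (-e))) (-e)‖ ≤ M := by
      intro t ht
      have h1 : p + t • (-e) = p + (-t) • e := by rw [neg_smul, ← smul_neg]
      rw [h1, pmul_neg_right, norm_neg]
      exact hM (-t) (habs t ht)
    have := seg_est hp H hNe hs' hseg' hM'
    rw [smul_neg, ← neg_smul, neg_neg] at this
    rwa [abs_of_neg h]

lemma exists_sigma (hp : IsPerplexParam a₁ a₂ a₃ b₁ b₂ b₃) :
    ∃ σ : ℝ, pN a₁ a₂ a₃ b₁ b₂ b₃ (σ, 1) ≠ 0 := by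
  by_contra hcon
  push_neg at hcon
  have h0 := hcon 0
  have h1 := hcon 1
  have h2 := hcon 2
  norm_num [pN] at h0 h1 h2
  exact hp.2.1 (by linear_combination (h2 - 2 * h1 + h0) / 2)

end Ana
section Cont
variable {a₁ a₂ a₃ b₁ b₂ b₃ : ℝ}

set_option maxHeartbeats 1000000 in
lemma cont_of_H (hp : IsPerplexParam a₁ a₂ a₃ b₁ b₂ b₃) {f d : ℝ × ℝ → ℝ × ℝ}
    {U : Set (ℝ × ℝ)} {x : ℝ × ℝ} (hU : U ∈ nhds x) (hd : ContinuousOn d U)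
    (H : ∀ y ∈ U, ∀ h : ℕ → ℝ × ℝ, PosSep a₁ a₂ a₃ b₁ b₂ b₃ h →
      Tendsto (fun n => pmul a₁ a₂ a₃ b₁ b₂ b₃ (f (y + h n) - f y)
        (pinv a₁ a₂ a₃ b₁ b₂ b₃ (h n))) atTop (nhds (d y))) :
    ∃ r > 0, Metric.ball x r ⊆ U ∧ ContinuousOn f (Metric.ball x r) := by
  obtain ⟨R, hR0, hRU⟩ := Metric.mem_nhds_iff.mp hU
  obtain ⟨σ, hσ⟩ := exists_sigma hp
  have hNe1 : pN a₁ a₂ a₃ b₁ b₂ b₃ ((1 : ℝ), (0 : ℝ)) ≠ 0 := by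
    have : pN a₁ a₂ a₃ b₁ b₂ b₃ ((1 : ℝ), (0 : ℝ)) = a₁ * b₂ - a₂ * b₁ := by
      norm_num [pN]
    rw [this]; exact hp.2.1
  set e₁ : ℝ × ℝ := ((1 : ℝ), (0 : ℝ)) with he₁
  set e₂ : ℝ × ℝ := (σ, (1 : ℝ)) with he₂
  set R' := R / 2 with hR'
  have hR'0 : 0 < R' := by positivity
  have hcb : Metric.closedBall x R' ⊆ U := by
    refine (Metric.closedBall_subset_ball ?_).trans hRU
    rw [hR']; linarith
  -- bounds for the derivative candidates on the closed ball
  have hcomp : IsCompact (Metric.closedBall x R') := isCompact_closedBall x R'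
  have hcont1 : ContinuousOn (fun z => pmul a₁ a₂ a₃ b₁ b₂ b₃ (d z) e₁)
      (Metric.closedBall x R') :=
    continuousOn_pmul2 (hd.mono hcb) continuousOn_const
  have hcont2 : ContinuousOn (fun z => pmul a₁ a₂ a₃ b₁ b₂ b₃ (d z) e₂)
      (Metric.closedBall x R') :=
    continuousOn_pmul2 (hd.mono hcb) continuousOn_const
  obtain ⟨M₁, hM₁⟩ := hcomp.exists_bound_of_continuousOn hcont1
  obtain ⟨M₂, hM₂⟩ := hcomp.exists_bound_of_continuousOn hcont2
  set M := max (max M₁ M₂) 0 with hM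
  have hM0 : 0 ≤ M := le_max_right _ _
  have hMb1 : ∀ z ∈ Metric.closedBall x R',
      ‖pmul a₁ a₂ a₃ b₁ b₂ b₃ (d z) e₁‖ ≤ M :=
    fun z hz => (hM₁ z hz).trans ((le_max_left M₁ M₂).trans (le_max_left _ _))
  have hMb2 : ∀ z ∈ Metric.closedBall x R',
      ‖pmul a₁ a₂ a₃ b₁ b₂ b₃ (d z) e₂‖ ≤ M :=
    fun z hz => (hM₂ z hz).trans ((le_max_right M₁ M₂).trans (le_max_left _ _))
  set K := 1 + |σ| with hK
  have hK1 : (1 : ℝ) ≤ K := by rw [hK]; have := abs_nonneg σ; linarith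
  have hne1 : ‖e₁‖ = 1 := by rw [he₁, Prod.norm_def]; norm_num
  have hne2 : ‖e₂‖ ≤ K := by
    rw [he₂, Prod.norm_def, hK]
    have h1 : ‖σ‖ ≤ 1 + |σ| := by rw [Real.norm_eq_abs]; linarith [abs_nonneg σ]
    have h2 : ‖(1 : ℝ)‖ ≤ 1 + |σ| := by rw [norm_one]; linarith [abs_nonneg σ]
    exact max_le h1 h2
  set r := R' / (1 + 4 * K) with hr
  have hr0 : 0 < r := by rw [hr]; positivity
  have hrR' : r ≤ R' := by
    rw [hr]
    rw [div_le_iff₀ (by linarith)]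
    nlinarith
  have hball : Metric.ball x r ⊆ U := by
    refine Set.Subset.trans ?_ hcb
    intro z hz
    exact Metric.mem_closedBall.mpr (le_trans (le_of_lt (Metric.mem_ball.mp hz)) hrR')
  refine ⟨r, hr0, hball, ?_⟩
  -- Lipschitz-type estimate on the ball
  have hest : ∀ y ∈ Metric.ball x r, ∀ z ∈ Metric.ball x r,
      ‖f z - f y‖ ≤ 2 * M * K * ‖z - y‖ := by
    intro y hy z hz
    set w : ℝ × ℝ := z - y with hw
    set uu : ℝ := w.1 - σ * w.2 with huu
    set tt : ℝ := w.2 with htt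
    have hwn : ‖w‖ ≤ 2 * r := by
      rw [hw, ← dist_eq_norm]
      have h1 := Metric.mem_ball.mp hy
      have h2 := Metric.mem_ball.mp hz
      calc dist z y ≤ dist z x + dist x y := dist_triangle z x y
        _ ≤ 2 * r := by rw [dist_comm x y]; linarith
    have huub : |uu| ≤ K * ‖w‖ := by
      rw [huu, hK]
      have h1 : |w.1| ≤ ‖w‖ := by
        rw [← Real.norm_eq_abs]; exact norm_fst_le w
      have h2 : |w.2| ≤ ‖w‖ := by
        rw [← Real.norm_eq_abs]; exact norm_snd_le w
      calc |w.1 - σ * w.2| ≤ |w.1| + |σ| * |w.2| := by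
            simpa [Real.norm_eq_abs] using norm_sub_le w.1 (σ * w.2)
        _ ≤ ‖w‖ + |σ| * ‖w‖ := by nlinarith [abs_nonneg σ]
        _ = (1 + |σ|) * ‖w‖ := by ring
    have httb : |tt| ≤ K * ‖w‖ := by
      rw [htt]
      have h2 : |w.2| ≤ ‖w‖ := by rw [← Real.norm_eq_abs]; exact norm_snd_le w
      have hn : 0 ≤ ‖w‖ := norm_nonneg w
      nlinarith
    set q : ℝ × ℝ := y + uu • e₁ with hq
    have hdecomp : z = q + tt • e₂ := by
      rw [hq, he₁, he₂]
      refine Prod.ext ?_ ?_ <;>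
        simp only [Prod.fst_add, Prod.snd_add, Prod.smul_fst, Prod.smul_snd, smul_eq_mul,
          huu, htt, hw, Prod.fst_sub, Prod.snd_sub] <;> ring
    -- membership of segments in closedBall x R'
    have hseg1 : ∀ t : ℝ, |t| ≤ |uu| → y + t • e₁ ∈ Metric.closedBall x R' := by
      intro t ht
      rw [Metric.mem_closedBall, dist_eq_norm]
      have : y + t • e₁ - x = (y - x) + t • e₁ := by abel
      rw [this]
      calc ‖(y - x) + t • e₁‖ ≤ ‖y - x‖ + ‖t • e₁‖ := norm_add_le _ _
        _ ≤ r + |t| * 1 := by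
            rw [norm_smul, Real.norm_eq_abs, hne1]
            have := Metric.mem_ball.mp hy
            rw [dist_eq_norm] at this
            linarith
        _ ≤ r + K * ‖w‖ := by
            have := le_trans ht huub
            nlinarith [abs_nonneg t]
        _ ≤ R' := by
            have h3 : K * ‖w‖ ≤ K * (2 * r) := by
              have hKpos : (0:ℝ) < K := lt_of_lt_of_le one_pos hK1
              nlinarith
            have h4 : r * (1 + 4 * K) = R' := by
              rw [hr]; field_simp
            nlinarith
    have hseg2 : ∀ t : ℝ, |t| ≤ |tt| → q + t • e₂ ∈ Metric.closedBall x R' := by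
      intro t ht
      rw [Metric.mem_closedBall, dist_eq_norm]
      have : q + t • e₂ - x = (y - x) + uu • e₁ + t • e₂ := by rw [hq]; abel
      rw [this]
      calc ‖(y - x) + uu • e₁ + t • e₂‖ ≤ ‖(y - x) + uu • e₁‖ + ‖t • e₂‖ := norm_add_le _ _
        _ ≤ (‖y - x‖ + ‖uu • e₁‖) + ‖t • e₂‖ := by
            have := norm_add_le (y - x) (uu • e₁); linarith
        _ ≤ (r + K * ‖w‖) + K * ‖w‖ := by
            have h1 : ‖uu • e₁‖ = |uu| := by rw [norm_smul, Real.norm_eq_abs, hne1, mul_one]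
            have h2 : ‖t • e₂‖ ≤ |t| * K := by
              rw [norm_smul, Real.norm_eq_abs]
              have := abs_nonneg t
              nlinarith [hne2, norm_nonneg e₂]
            have h3 := Metric.mem_ball.mp hy
            rw [dist_eq_norm] at h3
            have htw : |tt| ≤ ‖w‖ := by
              rw [htt, ← Real.norm_eq_abs]; exact norm_snd_le w
            have h4 : |t| ≤ ‖w‖ := le_trans ht htw
            have hK0 : (0:ℝ) ≤ K := le_trans zero_le_one hK1
            have h5 : |t| * K ≤ K * ‖w‖ := by nlinarith [abs_nonneg t]
            linarith [huub]
        _ ≤ R' := by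
            have hKpos : (0:ℝ) < K := lt_of_lt_of_le one_pos hK1
            have h3 : K * ‖w‖ ≤ K * (2 * r) := by nlinarith
            have h4 : r * (1 + 4 * K) = R' := by rw [hr]; field_simp
            nlinarith
    -- apply the two segment estimates
    have hH' : ∀ y' ∈ Metric.closedBall x R', ∀ h : ℕ → ℝ × ℝ,
        PosSep a₁ a₂ a₃ b₁ b₂ b₃ h →
        Tendsto (fun n => pmul a₁ a₂ a₃ b₁ b₂ b₃ (f (y' + h n) - f y')
          (pinv a₁ a₂ a₃ b₁ b₂ b₃ (h n))) atTop (nhds (d y')) :=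
      fun y' hy' => H y' (hcb hy')
    have hE1 : ‖f (y + uu • e₁) - f y‖ ≤ M * |uu| := by
      refine seg_est_signed hp hH' hNe1 (fun t ht => hseg1 t ht) (fun t ht => ?_)
      exact hMb1 _ (hseg1 t ht)
    have hE2 : ‖f (q + tt • e₂) - f q‖ ≤ M * |tt| := by
      refine seg_est_signed hp hH' hσ (fun t ht => hseg2 t ht) (fun t ht => ?_)
      exact hMb2 _ (hseg2 t ht)
    rw [← hq] at hE1
    calc ‖f z - f y‖ = ‖(f (q + tt • e₂) - f q) + (f q - f y)‖ := by rw [hdecomp]; congr 1; abel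
      _ ≤ ‖f (q + tt • e₂) - f q‖ + ‖f q - f y‖ := norm_add_le _ _
      _ ≤ M * |tt| + M * |uu| := by linarith
      _ ≤ 2 * M * K * ‖w‖ := by nlinarith [huub, httb, hM0, abs_nonneg tt, abs_nonneg uu]
      _ = 2 * M * K * ‖z - y‖ := by rw [hw]
  -- conclude continuity
  rw [Metric.continuousOn_iff]
  intro y hy ε hε
  have hKpos : (0:ℝ) < K := lt_of_lt_of_le one_pos hK1
  have hMK : (0:ℝ) ≤ 2 * M * K := by nlinarith [hM0]
  have hden : (0:ℝ) < 2 * M * K + 1 := by linarith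
  refine ⟨ε / (2 * M * K + 1), div_pos hε hden, fun z hz hdist => ?_⟩
  have h1 := hest y hy z hz
  rw [dist_eq_norm] at hdist
  rw [dist_eq_norm]
  have h2 : 2 * M * K * ‖z - y‖ ≤ 2 * M * K * (ε / (2 * M * K + 1)) :=
    mul_le_mul_of_nonneg_left hdist.le hMK
  have h3 : 2 * M * K * (ε / (2 * M * K + 1)) < ε := by
    rw [mul_div_assoc', div_lt_iff₀ hden]
    nlinarith
  exact lt_of_le_of_lt (le_trans h1 h2) h3
end Cont
/-- Sum and product rules for `ℙ_{a,b}`-differentiability. -/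
theorem pdiff_add_mul (a₁ a₂ a₃ b₁ b₂ b₃ : ℝ)
    (hp : IsPerplexParam a₁ a₂ a₃ b₁ b₂ b₃)
    (f g : ℝ × ℝ → ℝ × ℝ) (Lf Lg x : ℝ × ℝ)
    (hf : PDiffAt a₁ a₂ a₃ b₁ b₂ b₃ f Lf x) (hg : PDiffAt a₁ a₂ a₃ b₁ b₂ b₃ g Lg x) :
    PDiffAt a₁ a₂ a₃ b₁ b₂ b₃ (fun y => pmul a₁ a₂ a₃ b₁ b₂ b₃ (f y) (g y)) (pmul a₁ a₂ a₃ b₁ b₂ b₃ Lf (g x) + pmul a₁ a₂ a₃ b₁ b₂ b₃ (f x) Lg) x ∧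
    PDiffAt a₁ a₂ a₃ b₁ b₂ b₃ (fun y => f y + g y) (Lf + Lg) x := by
  obtain ⟨Uf, hUf, df, hdfx, hdfc, Hf⟩ := hf
  obtain ⟨Ug, hUg, dg, hdgx, hdgc, Hg⟩ := hg
  constructor
  · -- product rule
    obtain ⟨rf, hrf0, hrfU, hcf⟩ := cont_of_H hp hUf hdfc Hf
    obtain ⟨rg, hrg0, hrgU, hcg⟩ := cont_of_H hp hUg hdgc Hg
    set r := min rf rg with hr
    have hr0 : 0 < r := lt_min hrf0 hrg0
    have hbf : Metric.ball x r ⊆ Metric.ball x rf := Metric.ball_subset_ball (min_le_left _ _)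
    have hbg : Metric.ball x r ⊆ Metric.ball x rg := Metric.ball_subset_ball (min_le_right _ _)
    have hbUf : Metric.ball x r ⊆ Uf := hbf.trans hrfU
    have hbUg : Metric.ball x r ⊆ Ug := hbg.trans hrgU
    refine ⟨Metric.ball x r, Metric.ball_mem_nhds x hr0,
      fun y => pmul a₁ a₂ a₃ b₁ b₂ b₃ (df y) (g y) + pmul a₁ a₂ a₃ b₁ b₂ b₃ (f y) (dg y),
      by simp only [hdfx, hdgx], ?_, ?_⟩
    · exact (continuousOn_pmul2 (hdfc.mono hbUf) (hcg.mono hbg)).add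
        (continuousOn_pmul2 (hcf.mono hbf) (hdgc.mono hbUg))
    · intro y hy h hh
      have hQf := Hf y (hbUf hy) h hh
      have hQg := Hg y (hbUg hy) h hh
      have hgy : Tendsto (fun n => g (y + h n)) atTop (nhds (g y)) := by
        have hcy : ContinuousAt g y :=
          (hcg y (hbg hy)).continuousAt (Metric.isOpen_ball.mem_nhds (hbg hy))
        have hyn : Tendsto (fun n => y + h n) atTop (nhds y) := by
          have := tendsto_const_nhds (x := y) (f := atTop (α := ℕ)) |>.add hh.2.1
          simpa using this
        exact hcy.tendsto.comp hyn
      have hkey : ∀ n,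
          pmul a₁ a₂ a₃ b₁ b₂ b₃
            (pmul a₁ a₂ a₃ b₁ b₂ b₃ (f (y + h n)) (g (y + h n))
              - pmul a₁ a₂ a₃ b₁ b₂ b₃ (f y) (g y)) (pinv a₁ a₂ a₃ b₁ b₂ b₃ (h n))
          = pmul a₁ a₂ a₃ b₁ b₂ b₃
              (pmul a₁ a₂ a₃ b₁ b₂ b₃ (f (y + h n) - f y) (pinv a₁ a₂ a₃ b₁ b₂ b₃ (h n)))
              (g (y + h n))
            + pmul a₁ a₂ a₃ b₁ b₂ b₃ (f y)
              (pmul a₁ a₂ a₃ b₁ b₂ b₃ (g (y + h n) - g y) (pinv a₁ a₂ a₃ b₁ b₂ b₃ (h n))) :=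
        fun n => prod_quot_id hp _ _ _ _ _
      have hT := (tendsto_pmul (a₁ := a₁) (a₂ := a₂) (a₃ := a₃) (b₁ := b₁) (b₂ := b₂)
          (b₃ := b₃) hQf hgy).add
        (tendsto_pmul (a₁ := a₁) (a₂ := a₂) (a₃ := a₃) (b₁ := b₁) (b₂ := b₂)
          (b₃ := b₃) (tendsto_const_nhds (x := f y)) hQg)
      exact Tendsto.congr (fun n => (hkey n).symm) hT
  · -- sum rule
    refine ⟨Uf ∩ Ug, Filter.inter_mem hUf hUg, fun y => df y + dg y,
      by simp only [hdfx, hdgx],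
      (hdfc.mono Set.inter_subset_left).add (hdgc.mono Set.inter_subset_right), ?_⟩
    intro y hy h hh
    have h1 := Hf y hy.1 h hh
    have h2 := Hg y hy.2 h hh
    have hkey : ∀ n,
        pmul a₁ a₂ a₃ b₁ b₂ b₃ ((f (y + h n) + g (y + h n)) - (f y + g y))
          (pinv a₁ a₂ a₃ b₁ b₂ b₃ (h n))
        = pmul a₁ a₂ a₃ b₁ b₂ b₃ (f (y + h n) - f y) (pinv a₁ a₂ a₃ b₁ b₂ b₃ (h n))
          + pmul a₁ a₂ a₃ b₁ b₂ b₃ (g (y + h n) - g y) (pinv a₁ a₂ a₃ b₁ b₂ b₃ (h n)) := by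
      intro n
      rw [show (f (y + h n) + g (y + h n)) - (f y + g y)
        = (f (y + h n) - f y) + (g (y + h n) - g y) by abel, pmul_add_left]
    exact Tendsto.congr (fun n => (hkey n).symm) (h1.add h2)
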